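/- A torsion-free group with a non-zero, isomorphism-invariant, multiplicative volume-type invariant that is residually finite and finitely generated is cofinitely Hopfian. -/

import Mathlib

/-- A group is *cofinitely Hopfian* if every endomorphism whose image has
finite index is an automorphism (i.e. is bijective). -/
def CofinitelyHopfian (Γ : Type*) [Group Γ] : Prop :=
  ∀ φ : Γ →* Γ, φ.range.FiniteIndex → Function.Bijective φ

/-- A group is *residually finite* if every non-trivial element lies outside
some normal subgroup of finite index. -/
def ResiduallyFinite (Γ : Type*) [Group Γ] : Prop :=
  ∀ g : Γ, g ≠ 1 → ∃ N : Subgroup Γ, N.Normal ∧ N.FiniteIndex ∧ g ∉ N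

section Helpers

variable {G : Type*} [Group G]

/-- The `n`-th iterate of an endomorphism, as a monoid hom. -/
private def iterHom (ψ : G →* G) : ℕ → (G →* G)
  | 0 => MonoidHom.id G
  | n + 1 => ψ.comp (iterHom ψ n)

private lemma iterHom_succ (ψ : G →* G) (n : ℕ) :
    iterHom ψ (n + 1) = ψ.comp (iterHom ψ n) := rfl

private lemma iterHom_succ' (ψ : G →* G) (n : ℕ) :
    iterHom ψ (n + 1) = (iterHom ψ n).comp ψ := by
  induction n with
  | zero => rfl
  | succ n ih =>
    show ψ.comp (iterHom ψ (n + 1)) = (ψ.comp (iterHom ψ n)).comp ψ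
    rw [ih, MonoidHom.comp_assoc]

private lemma iterHom_add (ψ : G →* G) (a c : ℕ) :
    iterHom ψ (a + c) = (iterHom ψ c).comp (iterHom ψ a) := by
  induction c with
  | zero => rfl
  | succ c ih =>
    show ψ.comp (iterHom ψ (a + c)) = (ψ.comp (iterHom ψ c)).comp (iterHom ψ a)
    rw [ih, MonoidHom.comp_assoc]

private lemma iterHom_range_succ (ψ : G →* G) (n : ℕ) :
    (iterHom ψ (n + 1)).range = (iterHom ψ n).range.map ψ :=
  MonoidHom.range_comp ψ (iterHom ψ n)

private lemma iterHom_range_succ_le (ψ : G →* G) (n : ℕ) :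
    (iterHom ψ (n + 1)).range ≤ (iterHom ψ n).range := by
  rintro x ⟨y, rfl⟩
  rw [iterHom_succ']
  exact ⟨ψ y, rfl⟩

private lemma iterHom_index_ne_zero (ψ : G →* G) (hψ : ψ.range.index ≠ 0) (n : ℕ) :
    (iterHom ψ n).range.index ≠ 0 := by
  induction n with
  | zero =>
    have : (iterHom ψ 0).range = ⊤ :=
      (MonoidHom.id G).range_eq_top_of_surjective Function.surjective_id
    rw [this, Subgroup.index_top]; exact one_ne_zero
  | succ n ih =>
    rw [iterHom_range_succ, Subgroup.index_map]
    exact Nat.mul_ne_zero (ne_zero_of_dvd_ne_zero ih (Subgroup.index_dvd_of_le le_sup_left)) hψ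

private lemma finite_monoidHom (Q : Type*) [Group Q] [Group.FG G] [Finite Q] :
    Finite (G →* Q) := by
  obtain ⟨S, hSc, hSf⟩ := Group.fg_iff.mp ‹Group.FG G›
  haveI : Finite S := hSf.to_subtype
  apply Finite.of_injective (fun f : G →* Q => (fun s : S => f s))
  intro f g h
  ext x
  have hx : x ∈ Subgroup.closure S := hSc ▸ Subgroup.mem_top x
  induction hx using Subgroup.closure_induction with
  | mem y hy => exact congrFun h ⟨y, hy⟩
  | one => rw [map_one, map_one]
  | mul y z _ _ hy hz => rw [map_mul, map_mul, hy, hz]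
  | inv y _ hy => rw [map_inv, map_inv, hy]

private lemma resfin_subgroup (hrf : ResiduallyFinite G) (H : Subgroup G) :
    ResiduallyFinite H := by
  intro g hg
  have hg' : (g : G) ≠ 1 := by
    simpa [← OneMemClass.coe_eq_one] using hg
  obtain ⟨N, hNn, hNf, hgN⟩ := hrf g hg'
  haveI := hNf
  refine ⟨N.subgroupOf H, hNn.comap H.subtype, inferInstance, ?_⟩
  simpa [Subgroup.mem_subgroupOf] using hgN

end Helpers

/-- Key lemma (Hirshon/Mal'cev type): in a finitely generated residually finite
group, an endomorphism whose range has finite index has finite kernel. -/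
private theorem ker_finite_of_cofinite : ∀ (d : ℕ) {G : Type*} [Group G] [Group.FG G],
    ResiduallyFinite G → ∀ ψ : G →* G, ψ.range.index = d → d ≠ 0 → Finite ψ.ker := by
  intro d
  induction d using Nat.strong_induction_on with
  | _ d IH =>
    intro G _ _ hrf ψ hd hd0
    by_cases hcase : ∀ n, ψ.ker ≤ (iterHom ψ n).range
    · -- the kernel lies in all the iterated images; residual finiteness forces it trivial
      have hbot : ψ.ker = ⊥ := by
        refine (Subgroup.eq_bot_iff_forall _).mpr fun x hx => ?_
        by_contra hx1
        obtain ⟨N, hNn, hNf, hxN⟩ := hrf x hx1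
        haveI := hNn; haveI := hNf
        haveI : Finite (G →* G ⧸ N) := finite_monoidHom _
        have key : ∀ a b : ℕ, a < b →
            (QuotientGroup.mk' N).comp (iterHom ψ a) =
              (QuotientGroup.mk' N).comp (iterHom ψ b) → x ∈ N := by
          intro a b hab heq
          obtain ⟨y, hy⟩ := hcase a hx
          have h1 : (QuotientGroup.mk' N) x = (QuotientGroup.mk' N) (iterHom ψ b y) := by
            rw [← hy]
            exact DFunLike.congr_fun heq y
          have h2 : iterHom ψ b y = iterHom ψ (b - a) x := by
            conv_lhs => rw [show b = a + (b - a) by omega]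
            rw [iterHom_add]
            simp [hy]
          have h3 : iterHom ψ (b - a) x = 1 := by
            rw [show b - a = (b - a - 1) + 1 by omega, iterHom_succ']
            have : ψ x = 1 := MonoidHom.mem_ker.mp hx
            simp [this]
          have : (QuotientGroup.mk' N) x = 1 := by rw [h1, h2, h3, map_one]
          exact (QuotientGroup.eq_one_iff x).mp (by simpa using this)
        obtain ⟨a, b, hab, heq⟩ :=
          Finite.exists_ne_map_eq_of_infinite
            (fun n => (QuotientGroup.mk' N).comp (iterHom ψ n))
        rcases hab.lt_or_gt with h | h
        · exact hxN (key a b h heq)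
        · exact hxN (key b a h heq.symm)
      rw [hbot]
      exact Finite.of_subsingleton
    · push_neg at hcase
      obtain ⟨n, hn⟩ := hcase
      set H := (iterHom ψ n).range with hH
      haveI : H.FiniteIndex := ⟨iterHom_index_ne_zero ψ (hd ▸ hd0) n⟩
      have hmaps : ∀ x : H, ψ (x : G) ∈ H := by
        intro x
        exact iterHom_range_succ_le ψ n
          ((iterHom_range_succ ψ n) ▸ Subgroup.mem_map_of_mem ψ x.2)
      set ψ' : H →* H := (ψ.domRestrict H).codRestrict H (fun x => hmaps x) with hψ'
      have hrange : ψ'.range = ((iterHom ψ (n + 1)).range).subgroupOf H := by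
        ext x
        rw [Subgroup.mem_subgroupOf, iterHom_range_succ]
        constructor
        · rintro ⟨y, rfl⟩
          exact Subgroup.mem_map_of_mem ψ y.2
        · intro hx
          obtain ⟨g, hg, hgx⟩ := hx
          exact MonoidHom.mem_range.mpr ⟨⟨g, hg⟩, Subtype.ext hgx⟩
      -- index bookkeeping
      set dn := ((iterHom ψ (n + 1)).range).relIndex H with hdn
      set J := H ⊔ ψ.ker with hJ
      set e := H.relIndex J with he
      have e1 : dn * H.index = (iterHom ψ (n + 1)).range.index :=
        Subgroup.relIndex_mul_index (iterHom_range_succ_le ψ n)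
      have e2 : (iterHom ψ (n + 1)).range.index = J.index * d := by
        rw [iterHom_range_succ, Subgroup.index_map, hd]
      have e3 : e * J.index = H.index := Subgroup.relIndex_mul_index le_sup_left
      have hHi : H.index ≠ 0 := Subgroup.FiniteIndex.index_ne_zero
      have hJi : J.index ≠ 0 := fun h0 => hHi (by rw [← e3, h0, Nat.mul_zero])
      have hene : e ≠ 0 := fun h0 => hHi (by rw [← e3, h0, Nat.zero_mul])
      have hene1 : e ≠ 1 := by
        intro h1
        exact hn (le_trans le_sup_right (Subgroup.relIndex_eq_one.mp h1))
      have hkey : dn * e = d := by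
        have h4 : dn * (e * J.index) = (J.index * d) := by rw [e3, e1, e2]
        have h5 : (dn * e) * J.index = d * J.index := by ring_nf; ring_nf at h4; omega
        exact Nat.eq_of_mul_eq_mul_right (Nat.pos_of_ne_zero hJi) h5
      have hdn0 : dn ≠ 0 := fun h0 => hd0 (by rw [← hkey, h0, Nat.zero_mul])
      have hdnlt : dn < d := by
        have h2e : 2 ≤ e := (Nat.two_le_iff e).mpr ⟨hene, hene1⟩
        calc dn < dn + dn := Nat.lt_add_of_pos_right (Nat.pos_of_ne_zero hdn0)
          _ = dn * 2 := (Nat.mul_two dn).symm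
          _ ≤ dn * e := Nat.mul_le_mul (le_refl dn) h2e
          _ = d := hkey
      -- apply the induction hypothesis to the restriction of ψ to H
      haveI : Group.FG H := Subgroup.fg_of_index_ne_zero H
      have hrfH : ResiduallyFinite H := resfin_subgroup hrf H
      have hψ'idx : ψ'.range.index = dn := by rw [hrange]; rfl
      haveI : Finite ψ'.ker := IH dn hdnlt hrfH ψ' hψ'idx hdn0
      have hker : ψ'.ker = ψ.ker.subgroupOf H := by
        ext x
        simp only [MonoidHom.mem_ker, Subgroup.mem_subgroupOf, hψ',
          MonoidHom.codRestrict_apply, MonoidHom.restrict_apply]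
        rw [← Subtype.coe_inj]
        rfl
      haveI : Finite (ψ.ker.subgroupOf H) := hker ▸ ‹Finite ψ'.ker›
      haveI : Finite (H.subgroupOf ψ.ker) := by
        apply Finite.of_injective
          (fun x : H.subgroupOf ψ.ker => (⟨⟨(x : ψ.ker), x.2⟩, (x : ψ.ker).2⟩ : ψ.ker.subgroupOf H))
        intro x y hxy
        apply Subtype.ext; apply Subtype.ext
        exact congrArg (fun z : ψ.ker.subgroupOf H => ((z : H) : G)) hxy
      haveI : (H.subgroupOf ψ.ker).FiniteIndex := Subgroup.instFiniteIndex_subgroupOf H ψ.ker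
      exact Finite.of_equiv _ (Subgroup.groupEquivQuotientProdSubgroup
        (s := H.subgroupOf ψ.ker)).symm

/-- A finitely generated, residually finite, torsion-free group admitting a
non-zero (positive), isomorphism-invariant, multiplicative volume-type
invariant on its finite-index subgroups is cofinitely Hopfian. -/
theorem volumeTypeInvariant_implies_cofinitelyHopfian (Γ : Type*) [Group Γ]
    [Group.FG Γ] (hrf : ResiduallyFinite Γ) (htf : ∀ g : Γ, g ≠ 1 → ¬IsOfFinOrder g)
    (V : Subgroup Γ → ℝ)
    (hpos : ∀ H : Subgroup Γ, H.FiniteIndex → 0 < V H)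
    (hmul : ∀ H : Subgroup Γ, H.FiniteIndex → V H = (H.index : ℝ) * V ⊤)
    (hiso : ∀ H K : Subgroup Γ, H.FiniteIndex → K.FiniteIndex →
      Nonempty (H ≃* K) → V H = V K) :
    CofinitelyHopfian Γ := by
  intro φ hφ
  haveI := hφ
  haveI hker : Finite φ.ker :=
    ker_finite_of_cofinite φ.range.index hrf φ rfl hφ.index_ne_zero
  have hbot : φ.ker = ⊥ := by
    refine (Subgroup.eq_bot_iff_forall _).mpr fun x hx => ?_
    by_contra hx1
    have hfin : IsOfFinOrder (⟨x, hx⟩ : φ.ker) := isOfFinOrder_of_finite _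
    exact htf x hx1 (φ.ker.subtype.isOfFinOrder hfin)
  have hinj : Function.Injective φ := (MonoidHom.ker_eq_bot_iff φ).mp hbot
  have e : (⊤ : Subgroup Γ) ≃* φ.range :=
    Subgroup.topEquiv.trans (MonoidHom.ofInjective hinj)
  have hVr : V ⊤ = V φ.range := hiso ⊤ φ.range inferInstance hφ ⟨e⟩
  have hm : V φ.range = (φ.range.index : ℝ) * V ⊤ := hmul φ.range hφ
  have hpos' : 0 < V ⊤ := hpos ⊤ inferInstance
  have hc1 : (φ.range.index : ℝ) = 1 := by
    have h2 : ((φ.range.index : ℝ) - 1) * V ⊤ = 0 := by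
      rw [sub_mul, one_mul, ← hm, ← hVr, sub_self]
    rcases mul_eq_zero.mp h2 with h | h
    · linarith
    · linarith
  have hidx : φ.range.index = 1 := by exact_mod_cast hc1
  exact ⟨hinj, MonoidHom.range_eq_top.mp (Subgroup.index_eq_one.mp hidx)⟩
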